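/- arXiv:1102.2337 — 2 statements merged into one kernel-verified Lean document; each statement's English description precedes it below -/
import Mathlib

section
/- Two binary bracketings s, t with the same number n ≥ 2 of operation occurrences induce the same term function on the groupoid (ℤ/6ℤ[Y], ⊕) with X_1 ⊕ X_2 = 3Y·X_1 + 2Y·X_2 if and only if d_l(s) = d_l(t) and d_r(s) = d_r(t); consequently, the number of equivalence classes of bracketings with n operation occurrences under equality of induced term functions is (n² + n − 2)/2. -/
/-- p-ary bracketings: terms over one variable `x` with one p-ary operation symbol `ω`. -/
inductive Brack (p : ℕ) : Type
  | x : Brack p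
  | node : (Fin p → Brack p) → Brack p

namespace Brack

/-- occurrence number: number of occurrences of ω -/
def occ {p : ℕ} : Brack p → ℕ
  | .x => 0
  | .node f => 1 + ∑ i, occ (f i)

/-- length: number of occurrences of x -/
def len {p : ℕ} : Brack p → ℕ
  | .x => 1
  | .node f => ∑ i, len (f i)

/-- evaluation of a bracketing in a groupoid, variables enumerated left-to-right
starting at position `j`. -/
def evalFrom {p : ℕ} {A : Type*} (op : (Fin p → A) → A) (v : ℕ → A) :
    Brack p → ℕ → A
  | .x, j => v j
  | .node f, j =>
      op (fun i => evalFrom op v (f i)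
        (j + ∑ k ∈ Finset.univ.filter (· < i), len (f k)))

/-- the term function induced by a bracketing -/
def eval {p : ℕ} {A : Type*} (op : (Fin p → A) → A) (t : Brack p) (v : ℕ → A) : A :=
  evalFrom op v t 0

/-- prefix word of a bracketing: `true` codes ω, `false` codes x -/
def word {p : ℕ} : Brack p → List Bool
  | .x => [false]
  | .node f => true :: (List.ofFn (fun i => word (f i))).flatten

/-- auxiliary: scan a word, recording 1 + number of x's before each ω -/
def STaux : List Bool → ℕ → List ℕ
  | [], _ => []
  | true :: w, c => (c + 1) :: STaux w c
  | false :: w, c => STaux w (c + 1)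

/-- insertion tuple of a bracketing: the i-th entry is one plus the number
of x's preceding the i-th occurrence of ω in the prefix notation -/
def ST {p : ℕ} (t : Brack p) : List ℕ := STaux (word t) 0

/-- replace the i-th (0-based) occurrence of x in `t` by `s` -/
def replaceLeaf {p : ℕ} : Brack p → ℕ → Brack p → Brack p
  | .x, i, s => if i = 0 then s else .x
  | .node f, i, s => .node (fun j =>
      let off := ∑ k ∈ Finset.univ.filter (· < j), len (f k)
      if off ≤ i ∧ i < off + len (f j) then replaceLeaf (f j) (i - off) s else f j)

/-- β_i : insertion of ω x … x at the i-th (1-based) occurrence of x -/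
def beta {p : ℕ} (i : ℕ) (t : Brack p) : Brack p :=
  replaceLeaf t (i - 1) (.node (fun _ => .x))

/-- left depth: depth of leftmost leaf (binary case) -/
def dl : Brack 2 → ℕ
  | .x => 0
  | .node f => dl (f 0) + 1

/-- right depth: depth of rightmost leaf (binary case) -/
def dr : Brack 2 → ℕ
  | .x => 0
  | .node f => dr (f 1) + 1

/-- left factor of a binary bracketing -/
def leftF : Brack 2 → Brack 2
  | .x => .x
  | .node f => f 0

/-- whether a bracketing is the single variable x -/
def isX {p : ℕ} : Brack p → Bool
  | .x => true
  | .node _ => false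

/-- number of pairs of eggs, i.e. subterm occurrences of ω x x (binary case) -/
def eggs : Brack 2 → ℕ
  | .x => 0
  | .node f => (if isX (f 0) && isX (f 1) then 1 else 0) + eggs (f 0) + eggs (f 1)

end Brack

/-- generalized Catalan numbers -/
def genCat (p : ℕ) : ℕ → ℕ
  | 0 => 1
  | n + 1 =>
      ∑ v ∈ (Finset.Nat.antidiagonalTuple p n).attach, ∏ k : Fin p, genCat p (v.1 k)
  decreasing_by
    have hv := Finset.Nat.mem_antidiagonalTuple.mp v.2
    have hle : v.1 k ≤ n := by
      calc v.1 k ≤ ∑ i, v.1 i :=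
            Finset.single_le_sum (fun i _ => Nat.zero_le _) (Finset.mem_univ k)
        _ = n := hv
    omega

/-- the set M(n,k,p) of weakly increasing n-tuples of positive integers
with u_i ≤ (p-1)(i-1)+k (here indices are 0-based) -/
def Mset (n k p : ℕ) : Set (Fin n → ℕ) :=
  {u | (∀ i : Fin n, 1 ≤ u i ∧ u i ≤ (p - 1) * (i : ℕ) + k) ∧
    ∀ i j : Fin n, i ≤ j → u i ≤ u j}

/-- the operation ⊕ on ℤ/6ℤ[Y] : (X₁, X₂) ↦ 3Y·X₁ + 2Y·X₂ -/
noncomputable def oplus : (Fin 2 → Polynomial (ZMod 6)) → Polynomial (ZMod 6) :=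
  fun v => 3 * Polynomial.X * v 0 + 2 * Polynomial.X * v 1

/-- the setoid of equality of induced term functions on bracketings with n occurrences -/
def tfSetoid {A : Type*} (op : (Fin 2 → A) → A) (n : ℕ) :
    Setoid {t : Brack 2 // Brack.occ t = n} :=
  ⟨fun s t => ∀ v : ℕ → A, Brack.eval op s.1 v = Brack.eval op t.1 v,
    ⟨fun _ _ => rfl, fun h v => (h v).symm, fun h1 h2 v => (h1 v).trans (h2 v)⟩⟩


namespace Brack

lemma occ_node (f : Fin 2 → Brack 2) : occ (.node f) = 1 + (occ (f 0) + occ (f 1)) := by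
  simp [occ, Fin.sum_univ_two]

lemma len_node (f : Fin 2 → Brack 2) : len (.node f) = len (f 0) + len (f 1) := by
  simp [len, Fin.sum_univ_two]

lemma len_eq_occ_succ : ∀ t : Brack 2, len t = occ t + 1 := by
  intro t
  induction t with
  | x => rfl
  | node f ih => rw [len_node, occ_node, ih 0, ih 1]; ring

lemma dl_le_occ : ∀ t : Brack 2, dl t ≤ occ t := by
  intro t
  induction t with
  | x => simp [dl, occ]
  | node f ih => rw [occ_node]; have := ih 0; simp [dl]; omega

lemma dr_le_occ : ∀ t : Brack 2, dr t ≤ occ t := by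
  intro t
  induction t with
  | x => simp [dr, occ]
  | node f ih => rw [occ_node]; have := ih 1; simp [dr]; omega

lemma dl_add_dr_le : ∀ t : Brack 2, dl t + dr t ≤ occ t + 1 := by
  intro t
  cases t with
  | x => simp [dl, dr, occ]
  | node f =>
    rw [occ_node]
    have h0 := dl_le_occ (f 0)
    have h1 := dr_le_occ (f 1)
    simp [dl, dr]; omega

lemma dl_pos (f : Fin 2 → Brack 2) : 1 ≤ dl (.node f) := by simp [dl]
lemma dr_pos (f : Fin 2 → Brack 2) : 1 ≤ dr (.node f) := by simp [dr]

lemma not_one_one : ∀ t : Brack 2, 2 ≤ occ t → ¬(dl t = 1 ∧ dr t = 1) := by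
  intro t ht
  cases t with
  | x => simp [occ] at ht
  | node f =>
    rintro ⟨h1, h2⟩
    have hf0 : f 0 = .x := by
      cases h : f 0 with
      | x => rfl
      | node g => rw [show dl (Brack.node f) = dl (f 0) + 1 from rfl, h] at h1
                  exact absurd h1 (by have := dl_pos g; omega)
    have hf1 : f 1 = .x := by
      cases h : f 1 with
      | x => rfl
      | node g => rw [show dr (Brack.node f) = dr (f 1) + 1 from rfl, h] at h2
                  exact absurd h2 (by have := dr_pos g; omega)
    rw [occ_node, hf0, hf1] at ht
    simp [occ] at ht

end Brack
open Polynomial in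
lemma evalFrom_node (v : ℕ → Polynomial (ZMod 6)) (f : Fin 2 → Brack 2) (j : ℕ) :
    Brack.evalFrom oplus v (.node f) j =
      3 * X * Brack.evalFrom oplus v (f 0) j
        + 2 * X * Brack.evalFrom oplus v (f 1) (j + Brack.len (f 0)) := by
  have h0 : Finset.univ.filter (· < (0 : Fin 2)) = ∅ := by decide
  have h1 : Finset.univ.filter (· < (1 : Fin 2)) = {0} := by decide
  show oplus _ = _
  rw [oplus]
  rw [h0, h1]  -- probably fails; adjust
  simp

lemma two_pow_cases (b : ℕ) : (2 : ZMod 6) ^ b = 1 ∨ (2 : ZMod 6) ^ b = 2 ∨ (2 : ZMod 6) ^ b = 4 := by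
  induction b with
  | zero => left; rfl
  | succ k ih =>
    rw [pow_succ]
    rcases ih with h | h | h <;> rw [h] <;> decide

lemma two_pow_ne_zero (b : ℕ) : (2 : ZMod 6) ^ b ≠ 0 := by
  rcases two_pow_cases b with h | h | h <;> rw [h] <;> decide

lemma three_mul_two_pow (b : ℕ) (hb : 1 ≤ b) : (3 : ZMod 6) * 2 ^ b = 0 := by
  obtain ⟨k, rfl⟩ := Nat.exists_eq_add_of_le hb
  rw [pow_add, pow_one]
  rcases two_pow_cases k with h | h | h <;> rw [h] <;> decide
open Polynomial in
lemma eval_formula : ∀ t : Brack 2, 1 ≤ t.occ → ∀ (v : ℕ → Polynomial (ZMod 6)) (j : ℕ),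
    Brack.evalFrom oplus v t j =
      C 3 * X ^ t.dl * v j + C ((2 : ZMod 6) ^ t.dr) * X ^ t.dr * v (j + t.occ) := by
  have c3 : ((3 : Polynomial (ZMod 6))) = C 3 := (map_ofNat C 3).symm
  have c2 : ((2 : Polynomial (ZMod 6))) = C 2 := (map_ofNat C 2).symm
  have h9 : C (3 : ZMod 6) * C 3 = C 3 := by rw [← C_mul, show (3*3 : ZMod 6) = 3 from by decide]
  intro t
  induction t with
  | x => intro h; simp [Brack.occ] at h
  | node f ih =>
    intro _ v j
    rw [evalFrom_node]
    have hdl : Brack.dl (.node f) = Brack.dl (f 0) + 1 := rfl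
    have hdr : Brack.dr (.node f) = Brack.dr (f 1) + 1 := rfl
    have hlen := Brack.len_eq_occ_succ (f 0)
    have hocc := Brack.occ_node f
    have e0 : 3 * X * Brack.evalFrom oplus v (f 0) j
        = C 3 * X ^ (Brack.dl (f 0) + 1) * v j := by
      cases h : f 0 with
      | x =>
        show 3 * X * v j = C 3 * X ^ (0 + 1) * v j
        rw [c3]; ring
      | node g =>
        have ih' := ih 0 (by rw [h, Brack.occ_node]; omega) v j
        rw [h] at ih'
        rw [ih']
        have hb : 1 ≤ Brack.dr (Brack.node g) := Brack.dr_pos g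
        have hz : C (3 : ZMod 6) * C ((2 : ZMod 6) ^ Brack.dr (Brack.node g)) = 0 := by
          rw [← C_mul, three_mul_two_pow _ hb, C_0]
        rw [c3]
        linear_combination (X ^ (Brack.dl (Brack.node g) + 1) * v j) * h9
          + (X * (X ^ Brack.dr (Brack.node g) * v (j + Brack.occ (Brack.node g)))) * hz
    have e1 : 2 * X * Brack.evalFrom oplus v (f 1) (j + Brack.len (f 0))
        = C ((2 : ZMod 6) ^ (Brack.dr (f 1) + 1)) * X ^ (Brack.dr (f 1) + 1)
            * v (j + Brack.len (f 0) + Brack.occ (f 1)) := by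
      cases h : f 1 with
      | x =>
        show 2 * X * v (j + Brack.len (f 0)) = _
        have : Brack.occ (Brack.x : Brack 2) = 0 := rfl
        rw [this, c2]
        simp only [show Brack.dr (Brack.x : Brack 2) = 0 from rfl]
        ring
      | node g =>
        have ih' := ih 1 (by rw [h, Brack.occ_node]; omega) v (j + Brack.len (f 0))
        rw [h] at ih'
        rw [ih']
        have hz : C (2 : ZMod 6) * C (3 : ZMod 6) = 0 := by rw [← C_mul, show (2*3 : ZMod 6) = 0 from by decide, C_0]
        have hp : C (2 : ZMod 6) * C ((2:ZMod 6) ^ Brack.dr (Brack.node g))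
            = C ((2:ZMod 6) ^ (Brack.dr (Brack.node g) + 1)) := by
          rw [← C_mul, pow_succ]; ring_nf
        rw [c2]
        linear_combination (X * (X ^ Brack.dl (Brack.node g) * v (j + Brack.len (f 0)))) * hz
          + (X ^ (Brack.dr (Brack.node g) + 1)
              * v (j + Brack.len (f 0) + Brack.occ (Brack.node g))) * hp
    rw [e0, e1, hdl, hdr, hocc]
    have : j + Brack.len (f 0) + Brack.occ (f 1) = j + (1 + (Brack.occ (f 0) + Brack.occ (f 1))) := by
      omega
    rw [this]
open Polynomial in
lemma key_iff (n : ℕ) (hn : 2 ≤ n) (s t : Brack 2) (hs : Brack.occ s = n) (ht : Brack.occ t = n) :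
    (∀ v : ℕ → Polynomial (ZMod 6), Brack.eval oplus s v = Brack.eval oplus t v) ↔
      (Brack.dl s = Brack.dl t ∧ Brack.dr s = Brack.dr t) := by
  have hs1 : 1 ≤ Brack.occ s := by omega
  have ht1 : 1 ≤ Brack.occ t := by omega
  constructor
  · intro h
    constructor
    · have h0 := h (fun k => if k = 0 then 1 else 0)
      rw [Brack.eval, Brack.eval, eval_formula s hs1, eval_formula t ht1] at h0
      simp only [hs, ht] at h0
      have hnz : ¬ (0 + n = 0) := by omega
      simp only [hnz, if_false, if_true, eq_self_iff_true, mul_one, mul_zero, add_zero] at h0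
      have d1 := congrArg natDegree h0
      rwa [natDegree_C_mul_X_pow _ _ (by decide : (3 : ZMod 6) ≠ 0),
        natDegree_C_mul_X_pow _ _ (by decide : (3 : ZMod 6) ≠ 0)] at d1
    · have h0 := h (fun k => if k = n then 1 else 0)
      rw [Brack.eval, Brack.eval, eval_formula s hs1, eval_formula t ht1] at h0
      simp only [hs, ht] at h0
      have hnz : ¬ ((0:ℕ) = n) := by omega
      simp only [zero_add, hnz, if_false, if_true, eq_self_iff_true, mul_one, mul_zero, zero_add] at h0
      have d1 := congrArg natDegree h0
      rwa [natDegree_C_mul_X_pow _ _ (two_pow_ne_zero _),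
        natDegree_C_mul_X_pow _ _ (two_pow_ne_zero _)] at d1
  · rintro ⟨h1, h2⟩ v
    rw [Brack.eval, Brack.eval, eval_formula s hs1, eval_formula t ht1, h1, h2, hs, ht]

namespace Brack

def lComb : ℕ → Brack 2
  | 0 => .x
  | k + 1 => .node ![lComb k, .x]

def rComb : ℕ → Brack 2
  | 0 => .x
  | k + 1 => .node ![.x, rComb k]

@[simp] lemma occ_lComb (k : ℕ) : occ (lComb k) = k := by
  induction k with
  | zero => rfl
  | succ m ih =>
    rw [lComb, occ_node]
    simp only [Matrix.cons_val_zero, Matrix.cons_val_one, Matrix.head_cons, ih, occ]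
    omega

@[simp] lemma occ_rComb (k : ℕ) : occ (rComb k) = k := by
  induction k with
  | zero => rfl
  | succ m ih =>
    rw [rComb, occ_node]
    simp only [Matrix.cons_val_zero, Matrix.cons_val_one, Matrix.head_cons, ih, occ]
    omega

@[simp] lemma dl_lComb (k : ℕ) : dl (lComb k) = k := by
  induction k with
  | zero => rfl
  | succ m ih => rw [lComb]; show dl (lComb m) + 1 = m + 1; rw [ih]

@[simp] lemma dr_rComb (k : ℕ) : dr (rComb k) = k := by
  induction k with
  | zero => rfl
  | succ m ih => rw [rComb]; show dr (rComb m) + 1 = m + 1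
                 rw [ih]

lemma realize (n a b : ℕ) (ha : 1 ≤ a) (hb : 1 ≤ b) (hab : a + b ≤ n + 1)
    (hne : ¬(a = 1 ∧ b = 1)) : ∃ t : Brack 2, occ t = n ∧ dl t = a ∧ dr t = b := by
  rcases Nat.lt_or_ge a 2 with h2 | h2
  · -- a = 1, b ≥ 2
    have ha1 : a = 1 := by omega
    have hbne : b ≠ 1 := fun hb1 => hne ⟨ha1, hb1⟩
    have hb2 : 2 ≤ b := by omega
    refine ⟨.node ![.x, .node ![lComb (n - b), rComb (b - 2)]], ?_, ?_, ?_⟩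
    · rw [occ_node]
      simp only [Matrix.cons_val_zero, Matrix.cons_val_one, Matrix.head_cons]
      rw [occ_node]
      simp only [Matrix.cons_val_zero, Matrix.cons_val_one, Matrix.head_cons,
        occ_lComb, occ_rComb]
      show 1 + (0 + (1 + (n - b + (b - 2)))) = n
      omega
    · show dl (Brack.x) + 1 = a
      simp [dl]; omega
    · show dr (.node ![lComb (n - b), rComb (b - 2)]) + 1 = b
      show (dr (rComb (b - 2)) + 1) + 1 = b
      rw [dr_rComb]; omega
  · -- a ≥ 2
    refine ⟨.node ![.node ![lComb (a - 2), rComb (n + 1 - a - b)], rComb (b - 1)], ?_, ?_, ?_⟩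
    · rw [occ_node]
      simp only [Matrix.cons_val_zero, Matrix.cons_val_one, Matrix.head_cons]
      rw [occ_node]
      simp only [Matrix.cons_val_zero, Matrix.cons_val_one, Matrix.head_cons,
        occ_lComb, occ_rComb]
      omega
    · show dl (.node ![lComb (a - 2), rComb (n + 1 - a - b)]) + 1 = a
      show (dl (lComb (a - 2)) + 1) + 1 = a
      rw [dl_lComb]; omega
    · show dr (rComb (b - 1)) + 1 = b
      rw [dr_rComb]; omega

end Brack
def S0 (n : ℕ) : Finset (ℕ × ℕ) :=
  (Finset.range n).biUnion (fun a => (Finset.range (n - a)).image (fun b => (a + 1, b + 1)))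

lemma mem_S0 {n : ℕ} {p : ℕ × ℕ} :
    p ∈ S0 n ↔ 1 ≤ p.1 ∧ 1 ≤ p.2 ∧ p.1 + p.2 ≤ n + 1 := by
  simp only [S0, Finset.mem_biUnion, Finset.mem_image, Finset.mem_range]
  constructor
  · rintro ⟨a, ha, b, hb, rfl⟩
    simp; omega
  · rintro ⟨h1, h2, h3⟩
    exact ⟨p.1 - 1, by omega, p.2 - 1, by omega, by cases p with
      | mk x y => simp; omega⟩

lemma gauss (n : ℕ) : 2 * ∑ a ∈ Finset.range n, (n - a) = n ^ 2 + n := by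
  induction n with
  | zero => simp
  | succ m ih =>
    rw [Finset.sum_range_succ]
    have step : ∑ a ∈ Finset.range m, (m + 1 - a) = (∑ a ∈ Finset.range m, (m - a)) + m := by
      have : ∀ a ∈ Finset.range m, (m + 1 - a) = (m - a) + 1 := by
        intro a ha; rw [Finset.mem_range] at ha; omega
      rw [Finset.sum_congr rfl this, Finset.sum_add_distrib, Finset.sum_const, smul_eq_mul,
        Finset.card_range, mul_one]
    rw [step]
    have hsq : (m + 1) ^ 2 + (m + 1) = (m ^ 2 + m) + (2 * m + 2) := by ring
    rw [hsq, ← ih]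
    omega

lemma card_S0 (n : ℕ) : 2 * (S0 n).card = n ^ 2 + n := by
  rw [S0, Finset.card_biUnion]
  · have : ∀ a ∈ Finset.range n, ((Finset.range (n - a)).image (fun b => (a + 1, b + 1))).card
        = n - a := by
      intro a _
      rw [Finset.card_image_of_injective _ (fun x y h => by simpa using h), Finset.card_range]
    rw [Finset.sum_congr rfl this]
    exact gauss n
  · intro a _ b _ hab
    simp only [Finset.disjoint_left, Finset.mem_image, Finset.mem_range]
    rintro p ⟨x, hx, rfl⟩ ⟨y, hy, hp⟩
    have := congrArg Prod.fst hp
    simp at this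
    omega

theorem stmt_15 (n : ℕ) (hn : 2 ≤ n) :
    (∀ s t : Brack 2, Brack.occ s = n → Brack.occ t = n →
      ((∀ v : ℕ → Polynomial (ZMod 6), Brack.eval oplus s v = Brack.eval oplus t v) ↔
        (Brack.dl s = Brack.dl t ∧ Brack.dr s = Brack.dr t))) ∧
    Nat.card (Quotient (tfSetoid oplus n)) = (n ^ 2 + n - 2) / 2 := by
  refine ⟨fun s t hs ht => key_iff n hn s t hs ht, ?_⟩
  set S : Finset (ℕ × ℕ) := (S0 n).erase (1, 1) with hSdef
  -- the invariant map on the quotient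
  have hresp : ∀ a b : {t : Brack 2 // Brack.occ t = n},
      (tfSetoid oplus n).r a b → (Brack.dl a.1, Brack.dr a.1) = (Brack.dl b.1, Brack.dr b.1) := by
    intro a b hab
    obtain ⟨h1, h2⟩ := (key_iff n hn a.1 b.1 a.2 b.2).mp hab
    rw [h1, h2]
  let F : Quotient (tfSetoid oplus n) → ℕ × ℕ :=
    Quotient.lift (fun t => (Brack.dl t.1, Brack.dr t.1)) hresp
  have hdlr : ∀ t : Brack 2, Brack.occ t = n → 1 ≤ Brack.dl t ∧ 1 ≤ Brack.dr t := by
    intro t ht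
    cases t with
    | x => simp [Brack.occ] at ht; omega
    | node f => exact ⟨Brack.dl_pos f, Brack.dr_pos f⟩
  have hmem : ∀ q : Quotient (tfSetoid oplus n), F q ∈ S := by
    intro q
    induction q using Quotient.ind with
    | _ t =>
      obtain ⟨t, ht⟩ := t
      show (Brack.dl t, Brack.dr t) ∈ S
      rw [hSdef, Finset.mem_erase]
      constructor
      · have := Brack.not_one_one t (by omega)
        simp only [ne_eq, Prod.mk.injEq]
        tauto
      · rw [mem_S0]
        have h1 := hdlr t ht
        have h2 := Brack.dl_add_dr_le t
        exact ⟨h1.1, h1.2, by omega⟩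
  let G : Quotient (tfSetoid oplus n) → {p // p ∈ S} := fun q => ⟨F q, hmem q⟩
  have hbij : Function.Bijective G := by
    constructor
    · intro q q'
      induction q using Quotient.ind with
      | _ a =>
        induction q' using Quotient.ind with
        | _ b =>
          intro h
          have h' : (Brack.dl a.1, Brack.dr a.1) = (Brack.dl b.1, Brack.dr b.1) :=
            congrArg Subtype.val h
          rw [Prod.mk.injEq] at h'
          exact Quotient.sound ((key_iff n hn a.1 b.1 a.2 b.2).mpr ⟨h'.1, h'.2⟩)
    · rintro ⟨p, hp⟩
      rw [hSdef, Finset.mem_erase, mem_S0] at hp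
      obtain ⟨hne, h1, h2, h3⟩ := hp
      obtain ⟨t, ht, hdl, hdr⟩ := Brack.realize n p.1 p.2 h1 h2 h3
        (by intro ⟨e1, e2⟩; exact hne (by cases p; simp_all))
      refine ⟨⟦⟨t, ht⟩⟧, ?_⟩
      show (⟨(Brack.dl t, Brack.dr t), _⟩ : {p // p ∈ S}) = ⟨p, _⟩
      simp [hdl, hdr]
  have hcardQ : Nat.card (Quotient (tfSetoid oplus n)) = Nat.card {p // p ∈ S} :=
    Nat.card_eq_of_bijective G hbij
  rw [hcardQ, Nat.card_eq_fintype_card, Fintype.card_coe]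
  have h11 : (1, 1) ∈ S0 n := by rw [mem_S0]; omega
  rw [hSdef, Finset.card_erase_of_mem h11]
  have hc := card_S0 n
  omega
end

section
/- For every binary bracketing s with occurrence number n and insertion tuple u = ST(s), the leftmost-leaf depth satisfies d_l(s) = |{ q ∈ {1,…,n} : u_q = 1 }| and the rightmost-leaf depth satisfies d_r(s) = |{ q ∈ {1,…,n} : u_q = q }|. -/
namespace Brack

lemma STaux_append (w1 w2 : List Bool) (c : ℕ) :
    STaux (w1 ++ w2) c = STaux w1 c ++ STaux w2 (c + w1.count false) := by
  induction w1 generalizing c with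
  | nil => simp [STaux]
  | cons b w ih =>
    cases b <;> simp [STaux, ih, List.count_cons] <;> ring_nf

lemma STaux_shift (w : List Bool) (c d : ℕ) :
    STaux w (c + d) = (STaux w c).map (· + d) := by
  induction w generalizing c with
  | nil => simp [STaux]
  | cons b w ih =>
    cases b
    · simpa [STaux, Nat.add_right_comm c d 1] using ih (c + 1)
    · rw [STaux, STaux, ih c, List.map_cons, Nat.add_right_comm c d 1]

lemma word_node (f : Fin 2 → Brack 2) :
    word (.node f) = true :: (word (f 0) ++ word (f 1)) := by
  simp [word, List.ofFn_succ]

lemma count_false_word (t : Brack 2) : (word t).count false = len t := by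
  induction t with
  | x => simp [word, len]
  | node f ih =>
    rw [word_node, len]
    simp [List.count_cons, List.count_append, ih 0, ih 1, Fin.sum_univ_two]

lemma ST_node (f : Fin 2 → Brack 2) :
    ST (.node f) = 1 :: (ST (f 0) ++ (ST (f 1)).map (· + len (f 0))) := by
  rw [ST, word_node]
  show STaux (true :: (word (f 0) ++ word (f 1))) 0 = _
  rw [STaux, STaux_append, count_false_word]
  have : len (f 0) = 0 + len (f 0) := by omega
  rw [show (0 : ℕ) + len (f 0) = 0 + len (f 0) from rfl, STaux_shift]
  rfl

lemma one_le_len (t : Brack 2) : 1 ≤ len t := by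
  induction t with
  | x => simp [len]
  | node f ih =>
    rw [len, Fin.sum_univ_two]
    have := ih 0; omega

lemma len_eq_occ (t : Brack 2) : len t = occ t + 1 := by
  induction t with
  | x => simp [len, occ]
  | node f ih =>
    rw [len, occ, Fin.sum_univ_two, Fin.sum_univ_two, ih 0, ih 1]; ring

lemma length_ST (t : Brack 2) : (ST t).length = occ t := by
  induction t with
  | x => simp [ST, word, STaux, occ]
  | node f ih =>
    rw [ST_node, occ, Fin.sum_univ_two]
    simp [ih 0, ih 1]; ring

lemma mem_STaux_le (w : List Bool) (c : ℕ) {v : ℕ} (hv : v ∈ STaux w c) : c + 1 ≤ v := by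
  induction w generalizing c with
  | nil => simp [STaux] at hv
  | cons b w ih =>
    cases b
    · have := ih (c + 1) hv; omega
    · rw [STaux] at hv
      rcases List.mem_cons.mp hv with h | h
      · omega
      · exact ih c h

/-- counts entries of `l` equal to one plus their (base `k`) index -/
def gcount : List ℕ → ℕ → ℕ
  | [], _ => 0
  | a :: l, k => (if a = k + 1 then 1 else 0) + gcount l (k + 1)

lemma countP_enumFrom (l : List ℕ) (k : ℕ) :
    (l.zipIdx k).countP (fun q => q.1 = q.2 + 1) = gcount l k := by
  induction l generalizing k with
  | nil => simp [gcount]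
  | cons a l ih =>
    rw [List.zipIdx_cons, List.countP_cons, gcount, ih (k + 1)]
    by_cases h : a = k + 1 <;> simp [h] <;> omega

lemma gcount_append (l1 l2 : List ℕ) (k : ℕ) :
    gcount (l1 ++ l2) k = gcount l1 k + gcount l2 (k + l1.length) := by
  induction l1 generalizing k with
  | nil => simp [gcount]
  | cons a l ih =>
    simp [gcount, ih (k + 1)]
    ring_nf

lemma gcount_map (l : List ℕ) (k d : ℕ) :
    gcount (l.map (· + d)) (k + d) = gcount l k := by
  induction l generalizing k with
  | nil => simp [gcount]
  | cons a l ih =>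
    rw [List.map_cons, gcount, gcount, Nat.add_right_comm k d 1, ih (k + 1)]
    congr 1
    by_cases h : a = k + 1 <;> simp [h] <;> omega

lemma gcount_ST_pos (t : Brack 2) (k : ℕ) (hk : 1 ≤ k) : gcount (ST t) k = 0 := by
  induction t generalizing k with
  | x => simp [ST, word, STaux, gcount]
  | node f ih =>
    rw [ST_node, gcount, gcount_append, length_ST, len_eq_occ,
      show k + 1 + occ (f 0) = k + (occ (f 0) + 1) by omega,
      gcount_map (ST (f 1)) k (occ (f 0) + 1), ih 0 (k + 1) (by omega), ih 1 k hk]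
    split <;> omega

theorem stmt_17 (s : Brack 2) :
    Brack.dl s = (Brack.ST s).countP (fun a => a = 1) ∧
    Brack.dr s = (Brack.ST s).zipIdx.countP (fun q => q.1 = q.2 + 1) := by
  have key : ∀ t : Brack 2, dl t = (ST t).countP (fun a => a = 1) ∧
      dr t = gcount (ST t) 0 := by
    intro t
    induction t with
    | x => simp [ST, word, STaux, dl, dr, gcount]
    | node f ih =>
      constructor
      · rw [dl, ST_node, List.countP_cons, List.countP_append, List.countP_map]
        have h1 : (ST (f 1)).countP ((fun a => decide (a = 1)) ∘ (· + len (f 0))) = 0 := by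
          rw [List.countP_eq_zero]
          intro v hv
          have h0 := one_le_len (f 0)
          have hv1 : 1 ≤ v := by
            have := mem_STaux_le (word (f 1)) 0 (show v ∈ STaux (word (f 1)) 0 from hv)
            omega
          intro h
          rw [Function.comp_apply] at h
          have h' : v + len (f 0) = 1 := of_decide_eq_true h
          omega
        rw [h1, (ih 0).1]
        simp
      · rw [dr, ST_node, gcount, gcount_append, length_ST, len_eq_occ,
          show (0 : ℕ) + 1 + occ (f 0) = 0 + (occ (f 0) + 1) by omega,
          gcount_map (ST (f 1)) 0 (occ (f 0) + 1),
          gcount_ST_pos (f 0) 1 le_rfl, (ih 1).2]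
        split <;> omega
  rcases key s with ⟨h1, h2⟩
  refine ⟨h1, ?_⟩
  rw [h2, countP_enumFrom]

end Brack

theorem stmt_17 (s : Brack 2) :
    Brack.dl s = (Brack.ST s).countP (fun a => a = 1) ∧
    Brack.dr s = (Brack.ST s).zipIdx.countP (fun q => q.1 = q.2 + 1) :=
  Brack.stmt_17 s
end
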